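/- Fix L > 0, a continuous function W : [0,L] → ℝ with sup norm ‖W‖, an integer q ≥ 2 and α ∈ ℝ. Define s(λ) = sin(√λ L)/√λ + ∑_{k=1}^∞ S_k(λ), c(λ) = cos(√λ L) + ∑_{k=1}^∞ g_k(λ), and w(λ) = (q+1)c(λ) + α s(λ). Then there exists λ₀ > 0 (depending on L, ‖W‖, q, α) such that for every λ ≥ λ₀ with |w(λ)| ≤ 2√q, one has sin²(√λ L) ≥ (q−1)²/(4(q+1)²). -/

import Mathlib

open MeasureTheory Real Set

/-- The simplex `Δ_k = {0 ≤ t₁ ≤ ⋯ ≤ t_k ≤ L}` in `ℝ^k`. -/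
def simplexSet (L : ℝ) (k : ℕ) : Set (Fin k → ℝ) :=
  {t | Monotone t ∧ ∀ i, t i ∈ Set.Icc (0:ℝ) L}

/-- The extended sequence `(0, t₁, …, t_k, L)` of length `k+2`. -/
def extSeq (L : ℝ) {k : ℕ} (t : Fin k → ℝ) : Fin (k+2) → ℝ :=
  Fin.snoc (Fin.cons 0 t) L

/-- `S_k(λ) = ∫_{Δ_k} λ^{−(k+1)/2} ∏_{j=0}^{k} sin(√λ(t_{j+1}−t_j)) ∏_{j=1}^{k} W(t_j) dt`. -/
noncomputable def Sfun (L : ℝ) (W : ℝ → ℝ) (k : ℕ) (lam : ℝ) : ℝ :=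
  ∫ t in simplexSet L k,
    lam ^ (-((k:ℝ)+1)/2) *
      (∏ j : Fin (k+1),
        Real.sin (Real.sqrt lam * (extSeq L t j.succ - extSeq L t j.castSucc))) *
      ∏ j : Fin k, W (t j)

/-- `g_k(λ) = ∫_{Δ_k} λ^{−k/2} cos(√λ t₁) ∏_{j=1}^{k} sin(√λ(t_{j+1}−t_j)) ∏_{j=1}^{k} W(t_j) dt`. -/
noncomputable def Gfun (L : ℝ) (W : ℝ → ℝ) (k : ℕ) (lam : ℝ) : ℝ :=
  ∫ t in simplexSet L k,
    lam ^ (-(k:ℝ)/2) * Real.cos (Real.sqrt lam * extSeq L t 1) *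
      (∏ j : Fin k,
        Real.sin (Real.sqrt lam * (extSeq L t j.succ.succ - extSeq L t j.succ.castSucc))) *
      ∏ j : Fin k, W (t j)

/-- `s(λ) = sin(√λ L)/√λ + ∑_{k=1}^∞ S_k(λ)`. -/
noncomputable def sfun (L : ℝ) (W : ℝ → ℝ) (lam : ℝ) : ℝ :=
  Real.sin (Real.sqrt lam * L) / Real.sqrt lam + ∑' k : ℕ, Sfun L W (k+1) lam

/-- `c(λ) = cos(√λ L) + ∑_{k=1}^∞ g_k(λ)`. -/
noncomputable def cfun (L : ℝ) (W : ℝ → ℝ) (lam : ℝ) : ℝ :=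
  Real.cos (Real.sqrt lam * L) + ∑' k : ℕ, Gfun L W (k+1) lam

/-- `w(λ) = (q+1)c(λ) + α s(λ)`. -/
noncomputable def wfun (L : ℝ) (W : ℝ → ℝ) (q : ℕ) (α : ℝ) (lam : ℝ) : ℝ :=
  ((q:ℝ)+1) * cfun L W lam + α * sfun L W lam

lemma measurableSet_simplexSet (L : ℝ) (k : ℕ) : MeasurableSet (simplexSet L k) := by
  have h : simplexSet L k =
      (⋂ (p : Fin k × Fin k) (_ : p.1 ≤ p.2), {t : Fin k → ℝ | t p.1 ≤ t p.2}) ∩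
        ⋂ i : Fin k, (fun t : Fin k → ℝ => t i) ⁻¹' Icc (0:ℝ) L := by
    ext t
    simp only [simplexSet, mem_setOf_eq, mem_inter_iff, mem_iInter, Monotone, mem_preimage]
    constructor
    · rintro ⟨h1, h2⟩; exact ⟨fun p hp => h1 hp, h2⟩
    · rintro ⟨h1, h2⟩; exact ⟨fun i j hij => h1 (i, j) hij, h2⟩
  rw [h]
  apply MeasurableSet.inter
  · exact MeasurableSet.iInter fun p => MeasurableSet.iInter fun _ =>
      measurableSet_le (measurable_pi_apply _) (measurable_pi_apply _)
  · exact MeasurableSet.iInter fun i =>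
      measurableSet_preimage (measurable_pi_apply i) measurableSet_Icc

lemma volume_simplexSet_le (L : ℝ) (hL : 0 ≤ L) (k : ℕ) :
    volume (simplexSet L k) ≤ ENNReal.ofReal (L ^ k) := by
  have hsub : simplexSet L k ⊆ Set.pi univ (fun _ : Fin k => Icc (0:ℝ) L) :=
    fun t ht i _ => ht.2 i
  calc volume (simplexSet L k) ≤ volume (Set.pi univ fun _ : Fin k => Icc (0:ℝ) L) :=
        measure_mono hsub
    _ = ∏ _i : Fin k, volume (Icc (0:ℝ) L) := volume_pi_pi _
    _ = ENNReal.ofReal (L ^ k) := by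
        rw [Real.volume_Icc, sub_zero, Finset.prod_const, Finset.card_univ, Fintype.card_fin,
          ← ENNReal.ofReal_pow hL]

lemma mul3_le {a b c C : ℝ} (ha : 0 ≤ a) (hb : |b| ≤ 1) (hc : |c| ≤ C) :
    a * |b| * |c| ≤ a * C := by
  have h1 : a * |b| * |c| ≤ a * 1 * |c| :=
    mul_le_mul_of_nonneg_right (mul_le_mul_of_nonneg_left hb ha) (abs_nonneg c)
  have h2 : a * |c| ≤ a * C := mul_le_mul_of_nonneg_left hc ha
  linarith

lemma mul4_le {a b₀ b c C : ℝ} (ha : 0 ≤ a) (hb0 : |b₀| ≤ 1) (hb : |b| ≤ 1) (hc : |c| ≤ C) :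
    a * |b₀| * |b| * |c| ≤ a * C := by
  have hC : 0 ≤ C := le_trans (abs_nonneg c) hc
  have h1 := mul3_le (mul_nonneg ha (abs_nonneg b₀)) hb hc
  have h2 : a * |b₀| * C ≤ a * 1 * C :=
    mul_le_mul_of_nonneg_right (mul_le_mul_of_nonneg_left hb0 ha) hC
  linarith

lemma abs_prod_W_le {L M : ℝ} {W : ℝ → ℝ} (hM : ∀ x ∈ Icc (0:ℝ) L, |W x| ≤ M)
    {k : ℕ} {t : Fin k → ℝ} (ht : t ∈ simplexSet L k) :
    |∏ j : Fin k, W (t j)| ≤ M ^ k := by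
  rw [Finset.abs_prod]
  calc ∏ j : Fin k, |W (t j)| ≤ ∏ _j : Fin k, M :=
        Finset.prod_le_prod (fun j _ => abs_nonneg _) (fun j _ => hM _ (ht.2 j))
    _ = M ^ k := by rw [Finset.prod_const, Finset.card_univ, Fintype.card_fin]

lemma abs_prod_sin_le {x : ℝ} {n : ℕ} {f : Fin n → ℝ} :
    |∏ j : Fin n, Real.sin (x * f j)| ≤ 1 := by
  rw [Finset.abs_prod]
  exact Finset.prod_le_one (fun j _ => abs_nonneg _)
    (fun j _ => abs_le.2 ⟨Real.neg_one_le_sin _, Real.sin_le_one _⟩)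

lemma abs_Sfun_le (L : ℝ) (hL : 0 < L) (W : ℝ → ℝ) (M : ℝ)
    (hM : ∀ x ∈ Icc (0:ℝ) L, |W x| ≤ M) (k : ℕ) (lam : ℝ) (hlam : 0 < lam) :
    |Sfun L W k lam| ≤ lam ^ (-((k:ℝ)+1)/2) * (M ^ k * L ^ k) := by
  have hM0 : 0 ≤ M := le_trans (abs_nonneg _) (hM 0 ⟨le_refl 0, hL.le⟩)
  have hp : (0:ℝ) < lam ^ (-((k:ℝ)+1)/2) := Real.rpow_pos_of_pos hlam _
  have hb : ∀ t ∈ simplexSet L k,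
      ‖lam ^ (-((k:ℝ)+1)/2) *
        (∏ j : Fin (k+1),
          Real.sin (Real.sqrt lam * (extSeq L t j.succ - extSeq L t j.castSucc))) *
        ∏ j : Fin k, W (t j)‖ ≤ lam ^ (-((k:ℝ)+1)/2) * M ^ k := by
    intro t ht
    rw [Real.norm_eq_abs, abs_mul, abs_mul, abs_of_pos hp]
    have h2 := abs_prod_sin_le (x := Real.sqrt lam)
      (f := fun j : Fin (k+1) => extSeq L t j.succ - extSeq L t j.castSucc)
    have h3 := abs_prod_W_le hM ht
    exact mul3_le hp.le h2 h3
  have key := norm_setIntegral_le_of_norm_le_const (μ := volume)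
      (lt_of_le_of_lt (volume_simplexSet_le L hL.le k) ENNReal.ofReal_lt_top)
      hb
  calc |Sfun L W k lam| ≤ (lam ^ (-((k:ℝ)+1)/2) * M ^ k) * (volume (simplexSet L k)).toReal := by
        rw [Sfun, ← Real.norm_eq_abs]; exact key
    _ ≤ (lam ^ (-((k:ℝ)+1)/2) * M ^ k) * L ^ k := by
        refine mul_le_mul_of_nonneg_left ?_ (by positivity)
        exact ENNReal.toReal_le_of_le_ofReal (by positivity) (volume_simplexSet_le L hL.le k)
    _ = _ := by ring

lemma abs_Gfun_le (L : ℝ) (hL : 0 < L) (W : ℝ → ℝ) (M : ℝ)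
    (hM : ∀ x ∈ Icc (0:ℝ) L, |W x| ≤ M) (k : ℕ) (lam : ℝ) (hlam : 0 < lam) :
    |Gfun L W k lam| ≤ lam ^ (-(k:ℝ)/2) * (M ^ k * L ^ k) := by
  have hM0 : 0 ≤ M := le_trans (abs_nonneg _) (hM 0 ⟨le_refl 0, hL.le⟩)
  have hp : (0:ℝ) < lam ^ (-(k:ℝ)/2) := Real.rpow_pos_of_pos hlam _
  have hb : ∀ t ∈ simplexSet L k,
      ‖lam ^ (-(k:ℝ)/2) * Real.cos (Real.sqrt lam * extSeq L t 1) *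
        (∏ j : Fin k,
          Real.sin (Real.sqrt lam * (extSeq L t j.succ.succ - extSeq L t j.succ.castSucc))) *
        ∏ j : Fin k, W (t j)‖ ≤ lam ^ (-(k:ℝ)/2) * M ^ k := by
    intro t ht
    rw [Real.norm_eq_abs, abs_mul, abs_mul, abs_mul, abs_of_pos hp]
    have hc : |Real.cos (Real.sqrt lam * extSeq L t 1)| ≤ 1 :=
      abs_le.2 ⟨Real.neg_one_le_cos _, Real.cos_le_one _⟩
    have h2 := abs_prod_sin_le (x := Real.sqrt lam)
      (f := fun j : Fin k => extSeq L t j.succ.succ - extSeq L t j.succ.castSucc)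
    have h3 := abs_prod_W_le hM ht
    exact mul4_le hp.le hc h2 h3
  have key := norm_setIntegral_le_of_norm_le_const (μ := volume)
      (lt_of_le_of_lt (volume_simplexSet_le L hL.le k) ENNReal.ofReal_lt_top)
      hb
  calc |Gfun L W k lam| ≤ (lam ^ (-(k:ℝ)/2) * M ^ k) * (volume (simplexSet L k)).toReal := by
        rw [Gfun, ← Real.norm_eq_abs]; exact key
    _ ≤ (lam ^ (-(k:ℝ)/2) * M ^ k) * L ^ k := by
        refine mul_le_mul_of_nonneg_left ?_ (by positivity)
        exact ENNReal.toReal_le_of_le_ofReal (by positivity) (volume_simplexSet_le L hL.le k)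
    _ = _ := by ring

lemma rpow_neg_half_nat (lam : ℝ) (hlam : 0 < lam) (n : ℕ) :
    lam ^ (-(n:ℝ)/2) = ((Real.sqrt lam)⁻¹) ^ n := by
  have h1 : (Real.sqrt lam)⁻¹ = lam ^ (-(1:ℝ)/2) := by
    rw [Real.sqrt_eq_rpow, ← Real.rpow_neg hlam.le]
    norm_num
  rw [h1, ← Real.rpow_natCast (lam ^ (-(1:ℝ)/2)) n, ← Real.rpow_mul hlam.le]
  congr 1
  ring

lemma final_algebra (q : ℕ) (h2q : (2:ℝ) ≤ q) (x : ℝ)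
    (hcos : ((q:ℝ)+1) * |Real.cos x| ≤
      2*Real.sqrt q + ((q:ℝ)+1) * (((q:ℝ)-1)^2/(4*((q:ℝ)+1)^2))) :
    ((q:ℝ)-1)^2/(4*((q:ℝ)+1)^2) ≤ Real.sin x ^ 2 := by
  set Q : ℝ := (q:ℝ)+1 with hQdef
  have hQ3 : 3 ≤ Q := by rw [hQdef]; linarith
  have hQpos : (0:ℝ) < Q := by linarith
  set δ : ℝ := ((q:ℝ)-1)^2/(4*Q^2) with hδdef
  have hδpos : 0 < δ := div_pos (by nlinarith) (by nlinarith)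
  have hδ4 : δ ≤ 1/4 := by
    rw [hδdef, div_le_iff₀ (by nlinarith : (0:ℝ) < 4*Q^2)]
    nlinarith
  set s : ℝ := Real.sqrt q with hsdef
  have hs0 : 0 ≤ s := Real.sqrt_nonneg _
  have hs2 : s^2 = (q:ℝ) := Real.sq_sqrt (by positivity)
  have h2s : 2*s ≤ Q := by nlinarith [sq_nonneg (s-1)]
  have hδQ : δ * (4*Q^2) = ((q:ℝ)-1)^2 := by
    rw [hδdef]; field_simp
  have hcos2 : Q^2 * Real.cos x ^ 2 ≤ (2*s + Q*δ)^2 := by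
    have h1 : (Q * |Real.cos x|)^2 ≤ (2*s + Q*δ)^2 :=
      pow_le_pow_left₀ (by positivity) hcos 2
    calc Q^2 * Real.cos x ^ 2 = (Q * |Real.cos x|)^2 := by rw [mul_pow, sq_abs]
      _ ≤ _ := h1
  have htrig := Real.sin_sq_add_cos_sq x
  have htrigQ : Q^2 * Real.sin x ^ 2 = Q^2 - Q^2 * Real.cos x ^ 2 := by
    linear_combination Q^2 * htrig
  have hQ2pos : (0:ℝ) < Q^2 := by positivity
  nlinarith [hcos2, htrigQ, hδQ, hs2, hQ2pos,
    mul_nonneg (sub_nonneg.2 h2s) (mul_nonneg hδpos.le hQpos.le),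
    mul_nonneg (mul_nonneg hδpos.le (by linarith : (0:ℝ) ≤ 1 - δ)) hQ2pos.le]

/-- At high energy, `sin(√λ L)` is uniformly bounded away from `0` on the spectrum
`{λ : |w(λ)| ≤ 2√q}`: there is `λ₀ > 0` such that for all `λ ≥ λ₀` with
`|w(λ)| ≤ 2√q`, one has `sin²(√λ L) ≥ (q−1)²/(4(q+1)²)`. -/
theorem sin_lower_bound_on_spectrum (L : ℝ) (hL : 0 < L) (W : ℝ → ℝ)
    (hW : ContinuousOn W (Icc 0 L)) (M : ℝ) (hM : ∀ x ∈ Icc (0:ℝ) L, |W x| ≤ M)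
    (q : ℕ) (hq : 2 ≤ q) (α : ℝ) :
    ∃ lam₀ : ℝ, 0 < lam₀ ∧
      ∀ lam : ℝ, lam₀ ≤ lam → |wfun L W q α lam| ≤ 2 * Real.sqrt q →
        ((q:ℝ)-1)^2 / (4 * ((q:ℝ)+1)^2) ≤ Real.sin (Real.sqrt lam * L) ^ 2 := by
  have h2q : (2:ℝ) ≤ (q:ℝ) := by exact_mod_cast hq
  have hM0 : 0 ≤ M := le_trans (abs_nonneg _) (hM 0 ⟨le_rfl, hL.le⟩)
  set Q : ℝ := (q:ℝ)+1 with hQdef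
  have hQ3 : 3 ≤ Q := by rw [hQdef]; linarith
  have hQpos : 0 < Q := by linarith
  set δ : ℝ := ((q:ℝ)-1)^2 / (4 * Q^2) with hδdef
  have hδpos : 0 < δ := by
    apply div_pos
    · nlinarith
    · nlinarith
  have hδ4 : δ ≤ 1/4 := by
    rw [hδdef, div_le_iff₀ (by nlinarith : (0:ℝ) < 4 * Q^2)]
    nlinarith
  set K : ℝ := 2*M*L*Q + 2*|α| + 1 with hKdef
  have hK1 : 1 ≤ K := by
    have := abs_nonneg α
    nlinarith [mul_nonneg (mul_nonneg (mul_nonneg (by norm_num : (0:ℝ) ≤ 2) hM0) hL.le) hQpos.le]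
  refine ⟨(K/δ)^2 + 1, by positivity, ?_⟩
  intro lam hlam hw
  have hlam0 : 0 < lam := lt_of_lt_of_le (by positivity) hlam
  set u : ℝ := (Real.sqrt lam)⁻¹ with hudef
  have hsq : 0 < Real.sqrt lam := Real.sqrt_pos.2 hlam0
  have hu0 : 0 < u := inv_pos.2 hsq
  have hKu : K * u ≤ δ := by
    have h1 : K/δ ≤ Real.sqrt lam := by
      have h2 : K/δ = Real.sqrt ((K/δ)^2) := (Real.sqrt_sq (by positivity)).symm
      rw [h2]
      exact Real.sqrt_le_sqrt (by linarith)
    have h2 : K ≤ δ * Real.sqrt lam := by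
      calc K = δ * (K/δ) := by field_simp
        _ ≤ δ * Real.sqrt lam := mul_le_mul_of_nonneg_left h1 hδpos.le
    calc K * u ≤ (δ * Real.sqrt lam) * u := mul_le_mul_of_nonneg_right h2 hu0.le
      _ = δ := by rw [hudef]; field_simp
  have hKu' : (2*M*L*Q + 2*|α| + 1) * u ≤ δ := by rw [← hKdef]; exact hKu
  set r : ℝ := M*L*u with hrdef
  have hr0 : 0 ≤ r := by positivity
  have hr : r ≤ 1/2 := by
    nlinarith [mul_nonneg (abs_nonneg α) hu0.le, hu0.le,
      mul_nonneg (sub_nonneg.2 hQ3) (mul_nonneg (mul_nonneg hM0 hL.le) hu0.le)]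
  -- tail bounds
  have hSb : ∀ k : ℕ, ‖Sfun L W (k+1) lam‖ ≤ u * ((1/2:ℝ)^k * (1/2)) := by
    intro k
    have h0 := abs_Sfun_le L hL W M hM (k+1) lam hlam0
    have hexp : lam ^ (-(((k+1:ℕ):ℝ)+1)/2) = u ^ (k+2) := by
      rw [hudef, ← rpow_neg_half_nat lam hlam0 (k+2)]
      congr 1; push_cast; ring
    have hrk : r ^ (k+1) ≤ (1/2:ℝ)^(k+1) := pow_le_pow_left₀ hr0 hr (k+1)
    rw [Real.norm_eq_abs]
    calc |Sfun L W (k+1) lam| ≤ lam ^ (-(((k+1:ℕ):ℝ)+1)/2) * (M^(k+1) * L^(k+1)) := h0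
      _ = u * r ^ (k+1) := by
          rw [hexp, hrdef, mul_pow, mul_pow, pow_succ u (k+1)]; ring
      _ ≤ u * (1/2:ℝ)^(k+1) := mul_le_mul_of_nonneg_left hrk hu0.le
      _ = u * ((1/2:ℝ)^k * (1/2)) := by rw [pow_succ]
  have hGb : ∀ k : ℕ, ‖Gfun L W (k+1) lam‖ ≤ r * (1/2:ℝ)^k := by
    intro k
    have h0 := abs_Gfun_le L hL W M hM (k+1) lam hlam0
    have hexp : lam ^ (-((k+1:ℕ):ℝ)/2) = u ^ (k+1) := by
      rw [hudef, ← rpow_neg_half_nat lam hlam0 (k+1)]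
    have hrk : r ^ k ≤ (1/2:ℝ)^k := pow_le_pow_left₀ hr0 hr k
    rw [Real.norm_eq_abs]
    calc |Gfun L W (k+1) lam| ≤ lam ^ (-((k+1:ℕ):ℝ)/2) * (M^(k+1) * L^(k+1)) := h0
      _ = r * r ^ k := by rw [hexp, hrdef, mul_pow, mul_pow, pow_succ]; ring
      _ ≤ r * (1/2:ℝ)^k := mul_le_mul_of_nonneg_left hrk hr0
  have hhalf : HasSum (fun k:ℕ => (1/2:ℝ)^k) 2 := by
    have h := hasSum_geometric_of_lt_one (by norm_num : (0:ℝ) ≤ 1/2) (by norm_num : (1/2:ℝ) < 1)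
    convert h using 1
    norm_num
  have htailS : ‖∑' k : ℕ, Sfun L W (k+1) lam‖ ≤ u * (2 * (1/2)) :=
    tsum_of_norm_bounded ((hhalf.mul_right (1/2)).mul_left u) hSb
  have htailG : ‖∑' k : ℕ, Gfun L W (k+1) lam‖ ≤ r * 2 :=
    tsum_of_norm_bounded (hhalf.mul_left r) hGb
  rw [Real.norm_eq_abs] at htailS htailG
  -- bounds on sfun and cfun
  have hsfb : |sfun L W lam| ≤ 2 * u := by
    simp only [sfun]
    refine le_trans (abs_add_le _ _) ?_
    have h1 : |Real.sin (Real.sqrt lam * L) / Real.sqrt lam| ≤ u := by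
      rw [abs_div, abs_of_pos hsq, hudef, inv_eq_one_div]
      gcongr
      exact abs_le.2 ⟨Real.neg_one_le_sin _, Real.sin_le_one _⟩
    linarith
  have hcfb : |cfun L W lam - Real.cos (Real.sqrt lam * L)| ≤ 2 * r := by
    simp only [cfun, add_sub_cancel_left]
    linarith
  -- main estimate on cos
  have hQc : Q * cfun L W lam = wfun L W q α lam - α * sfun L W lam := by
    simp only [wfun, hQdef]; ring
  have hcosQ : Q * |Real.cos (Real.sqrt lam * L)| ≤ 2 * Real.sqrt q + Q * δ := by
    have e1 : Q * Real.cos (Real.sqrt lam * L) =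
        (wfun L W q α lam - α * sfun L W lam)
          - Q * (cfun L W lam - Real.cos (Real.sqrt lam * L)) := by
      rw [← hQc]; ring
    have e2 : Q * |Real.cos (Real.sqrt lam * L)| = |Q * Real.cos (Real.sqrt lam * L)| := by
      rw [abs_mul, abs_of_pos hQpos]
    have h3 : |Q * Real.cos (Real.sqrt lam * L)| ≤
        |wfun L W q α lam| + |α| * |sfun L W lam| + Q * |cfun L W lam - Real.cos (Real.sqrt lam * L)| := by
      rw [e1]
      refine le_trans (abs_sub _ _) ?_
      have h4 : |wfun L W q α lam - α * sfun L W lam| ≤ |wfun L W q α lam| + |α| * |sfun L W lam| := by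
        refine le_trans (abs_sub _ _) ?_
        rw [abs_mul]
      have h5 : |Q * (cfun L W lam - Real.cos (Real.sqrt lam * L))| =
          Q * |cfun L W lam - Real.cos (Real.sqrt lam * L)| := by
        rw [abs_mul, abs_of_pos hQpos]
      linarith
    have h6 : |α| * |sfun L W lam| ≤ |α| * (2*u) :=
      mul_le_mul_of_nonneg_left hsfb (abs_nonneg α)
    have h7 : Q * |cfun L W lam - Real.cos (Real.sqrt lam * L)| ≤ Q * (2*r) :=
      mul_le_mul_of_nonneg_left hcfb hQpos.le
    have h8 : Q * (2*r) = 2*M*L*Q*u := by rw [hrdef]; ring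
    have h9 : δ ≤ Q * δ := le_mul_of_one_le_left hδpos.le (by linarith)
    rw [e2]
    linarith [h3, hw, h6, h7, h8, h9, hKu', hu0.le]
  rw [hδdef, hQdef] at hcosQ ⊢
  exact final_algebra q h2q _ hcosQ
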